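/- Let g be a Lie algebra over an algebraically closed field F and suppose x·y = [φ(x),y] defines a CPA-structure on g, where φ : g → g is linear. If g_α and g_β denote the generalized eigenspaces of φ for eigenvalues α and β, then [g_α, g_β] ≠ 0 implies α + β = 0. -/
import Mathlib


/-- For an inner CPA-structure `x·y = ⁅φ(x),y⁆` over an algebraically closed field,
nonvanishing bracket of generalized eigenspaces forces `α + β = 0`. -/
theorem cpa_genEigenspace_bracket_sum_zero
    (F : Type*) [Field F] [IsAlgClosed F] (L : Type*) [LieRing L] [LieAlgebra F L]
    [FiniteDimensional F L]
    (φ : L →ₗ[F] L)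
    (hcomm : ∀ x y : L, ⁅φ x, y⁆ = ⁅φ y, x⁆)
    (hpost : ∀ x y z : L, ⁅φ ⁅x, y⁆, z⁆ = ⁅φ x, ⁅φ y, z⁆⁆ - ⁅φ y, ⁅φ x, z⁆⁆)
    (hder : ∀ x y z : L, ⁅φ x, ⁅y, z⁆⁆ = ⁅⁅φ x, y⁆, z⁆ + ⁅y, ⁅φ x, z⁆⁆) :
    ∀ α β : F,
      (∃ x ∈ Module.End.maxGenEigenspace φ α, ∃ y ∈ Module.End.maxGenEigenspace φ β,
        ⁅x, y⁆ ≠ 0) → α + β = 0 := by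
  intro α β h
  obtain ⟨x, hx, y, hy, hxy⟩ := h
  by_contra hab
  apply hxy
  -- skew-adjointness of `φ` w.r.t. the bracket
  have skew : ∀ u v : L, ⁅φ u, v⁆ = -⁅u, φ v⁆ := by
    intro u v
    rw [hcomm, ← lie_skew]
  set ψ : Module.End F L := φ - α • 1 with hψ
  set χ : Module.End F L := φ + α • 1 with hχ
  -- one step
  have step : ∀ u v : L, ⁅ψ u, v⁆ = -⁅u, χ v⁆ := by
    intro u v
    simp only [hψ, hχ, LinearMap.sub_apply, LinearMap.add_apply, LinearMap.smul_apply,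
      Module.End.one_apply, sub_lie, lie_add, smul_lie, lie_smul, skew u v]
    abel
  -- iterated step
  have key : ∀ (n : ℕ) (u v : L), ⁅(ψ ^ n) u, v⁆ = ((-1 : F) ^ n) • ⁅u, (χ ^ n) v⁆ := by
    intro n
    induction n with
    | zero => intro u v; simp
    | succ n ih =>
      intro u v
      have h1 : (ψ ^ (n + 1)) u = (ψ ^ n) (ψ u) := by
        rw [pow_succ]; rfl
      have h2 : (χ ^ (n + 1)) v = (χ ^ n) (χ v) := by
        rw [pow_succ]; rfl
      rw [h1, ih (ψ u) v, step u ((χ ^ n) v), pow_succ]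
      have h3 : (χ ^ n) (χ v) = χ ((χ ^ n) v) := by
        rw [← Module.End.mul_apply, ← Module.End.mul_apply, ← pow_succ, ← pow_succ']
      rw [h2, h3, mul_smul, neg_one_smul]
  -- `x` is annihilated by a power of `ψ`
  obtain ⟨n, hn⟩ := (Module.End.mem_maxGenEigenspace φ α x).mp hx
  have hx0 : ∀ v : L, ⁅x, (χ ^ n) v⁆ = 0 := by
    intro v
    have := key n x v
    rw [hn, zero_lie] at this
    have hne : ((-1 : F) ^ n) ≠ 0 := pow_ne_zero n (by norm_num)
    rcases smul_eq_zero.mp this.symm with h | h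
    · exact absurd h hne
    · exact h
  -- `χ` restricts to a surjection of the `β`-generalized eigenspace
  set W : Submodule F L := Module.End.maxGenEigenspace φ β with hW
  have hcommχ : Commute φ χ := by
    simp only [hχ, Commute, SemiconjBy, mul_add, add_mul, mul_one, one_mul,
      Algebra.mul_smul_comm, Algebra.smul_mul_assoc]
  have hmaps : ∀ w ∈ W, χ w ∈ W :=
    fun w hw => Module.End.mapsTo_maxGenEigenspace_of_comm hcommχ β hw
  set χr : Module.End F W := χ.restrict hmaps with hχr
  have hinj : Function.Injective χr := by
    intro a b hab'
    have h0 : χ ((a : L) - b) = 0 := by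
      have : ((χr a : W) : L) = ((χr b : W) : L) := congrArg _ hab'
      rw [LinearMap.restrict_coe_apply, LinearMap.restrict_coe_apply] at this
      rw [map_sub, this, sub_self]
    have hmem : ((a : L) - b) ∈ Module.End.maxGenEigenspace φ (-α) := by
      rw [Module.End.mem_maxGenEigenspace]
      exact ⟨1, by simpa [hχ, sub_neg_eq_add, neg_smul] using h0⟩
    have hmem' : ((a : L) - b) ∈ W := sub_mem a.2 b.2
    have hdisj : Disjoint (Module.End.maxGenEigenspace φ (-α)) W := by
      refine Module.End.disjoint_genEigenspace φ ?_ ⊤ ⊤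
      intro hcon
      exact hab (by rw [← hcon]; ring)
    have : (a : L) - b = 0 := by
      have := hdisj.le_bot ⟨hmem, hmem'⟩
      simpa using this
    exact Subtype.ext (sub_eq_zero.mp this)
  have hsurj : Function.Surjective (χr ^ n) := by
    apply LinearMap.injective_iff_surjective.mp
    intro a b hab'
    rw [Module.End.pow_apply, Module.End.pow_apply] at hab'
    exact hinj.iterate n hab'
  obtain ⟨z, hz⟩ := hsurj ⟨y, hy⟩
  have hz' : (χ ^ n) (z : L) = y := by
    have := congrArg (Subtype.val) hz
    rwa [Module.End.pow_restrict, LinearMap.restrict_coe_apply] at this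
  rw [← hz', hx0]
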